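/- arXiv:2106.13962 — 2 statements merged into one kernel-verified Lean document; each statement's English description precedes it below -/
import Mathlib

section
/- For any real numbers y_1, ..., y_n and any β > 0, the weighted L² distance n ∫_{-∞}^{∞} |ψ_n(t) - e^{-t²/2}|² φ_β(t) dt, where ψ_n(t) = (1/n) Σ_{j=1}^n exp(i t y_j) and φ_β(t) = (β√(2π))^{-1} exp(-t²/(2β²)), equals the closed-form expression (1/n) Σ_{j,k=1}^n exp(-(β²/2)(y_j - y_k)²) - (2/√(1+β²)) Σ_{j=1}^n exp(-β² y_j²/(2(1+β²))) + n/√(1+2β²). -/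
open MeasureTheory Real Complex Finset

noncomputable def Tc (β p a : ℝ) (t : ℝ) : ℂ :=
  ((1 / (β * Real.sqrt (2 * Real.pi)) : ℝ) : ℂ)
    * Complex.exp (-(p : ℂ) * (t : ℂ) ^ 2 + (a : ℂ) * Complex.I * (t : ℂ))

lemma key_int (p a : ℝ) (hp : 0 < p) :
    ∫ t : ℝ, Complex.exp (-(p : ℂ) * (t : ℂ) ^ 2 + (a : ℂ) * Complex.I * (t : ℂ))
      = ((Real.sqrt (π / p) * Real.exp (-(a ^ 2) / (4 * p)) : ℝ) : ℂ) := by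
  have h := integral_cexp_quadratic (b := -(p : ℂ)) (by simpa using hp)
      ((a : ℂ) * Complex.I) 0
  simp only [add_zero, neg_neg] at h
  have h2 : ∫ t : ℝ, Complex.exp (-(p : ℂ) * (t : ℂ) ^ 2 + (a : ℂ) * Complex.I * (t : ℂ))
      = ((π : ℂ) / p) ^ (1 / 2 : ℂ) * Complex.exp (0 - ((a:ℂ)*Complex.I) ^ 2 / (4 * -(p:ℂ))) := by
    rw [← h]
  rw [h2]
  have hpow : ((π : ℂ) / p) ^ (1 / 2 : ℂ) = ((Real.sqrt (π / p) : ℝ) : ℂ) := by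
    rw [Real.sqrt_eq_rpow, Complex.ofReal_cpow (by positivity)]
    push_cast
    ring_nf
  rw [hpow]
  have hexp : (0 - ((a:ℂ)*Complex.I) ^ 2 / (4 * -(p:ℂ))) = ((-(a^2)/(4*p) : ℝ) : ℂ) := by
    have : (p : ℂ) ≠ 0 := by exact_mod_cast hp.ne'
    field_simp
    ring_nf
    simp [Complex.I_sq]
    field_simp
  rw [hexp, ← Complex.ofReal_exp, ← Complex.ofReal_mul]

lemma Tc_integrable (β p a : ℝ) (hp : 0 < p) : Integrable (Tc β p a) := by
  have := (integrable_cexp_quadratic (b := (p : ℂ)) (by simpa using hp)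
      ((a : ℂ) * Complex.I) 0).const_mul ((1 / (β * Real.sqrt (2 * Real.pi)) : ℝ) : ℂ)
  show Integrable (fun t => Tc β p a t)
  simpa only [Tc, add_zero] using this

lemma Tc_integral (β p a : ℝ) (hp : 0 < p) :
    ∫ t : ℝ, Tc β p a t
      = (((1 / (β * Real.sqrt (2 * Real.pi))) * Real.sqrt (π / p)
          * Real.exp (-(a ^ 2) / (4 * p)) : ℝ) : ℂ) := by
  unfold Tc
  rw [MeasureTheory.integral_const_mul, key_int p a hp, ← Complex.ofReal_mul]
  push_cast
  ring

lemma merge3 (c : ℝ) (X Y W : ℂ) :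
    Complex.exp X * Complex.exp Y * ((c : ℂ) * Complex.exp W)
      = (c : ℂ) * Complex.exp (X + Y + W) := by
  rw [Complex.exp_add, Complex.exp_add]; ring

lemma merge2 (c : ℝ) (X W : ℂ) :
    Complex.exp X * ((c : ℂ) * Complex.exp W) = (c : ℂ) * Complex.exp (X + W) := by
  rw [Complex.exp_add]; ring

lemma pointwise (n : ℕ) (y : Fin n → ℝ) (β : ℝ) (hβ : 0 < β) (t : ℝ) :
    ‖(1 / (n : ℂ)) * ∑ j, Complex.exp (Complex.I * (t : ℂ) * (y j : ℂ))
        - (Real.exp (-t ^ 2 / 2) : ℂ)‖ ^ 2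
      * ((1 / (β * Real.sqrt (2 * Real.pi))) * Real.exp (-t ^ 2 / (2 * β ^ 2)))
    = ((1 / (n : ℂ)) ^ 2 * ∑ j, ∑ k, Tc β (1 / (2 * β ^ 2)) (y j - y k) t
       - (1 / (n : ℂ)) * ∑ j, Tc β (1 / (2 * β ^ 2) + 1 / 2) (y j) t
       - (1 / (n : ℂ)) * ∑ j, Tc β (1 / (2 * β ^ 2) + 1 / 2) (-(y j)) t
       + Tc β (1 / (2 * β ^ 2) + 1) 0 t).re := by
  have hβ' : (β : ℂ) ≠ 0 := by exact_mod_cast hβ.ne'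
  set z : ℂ := (1 / (n : ℂ)) * ∑ j, Complex.exp (Complex.I * (t : ℂ) * (y j : ℂ))
      - (Real.exp (-t ^ 2 / 2) : ℂ) with hz
  set φ : ℝ := (1 / (β * Real.sqrt (2 * Real.pi))) * Real.exp (-t ^ 2 / (2 * β ^ 2)) with hφ
  have h1 : ‖z‖ ^ 2 * φ = (z * (starRingEnd ℂ) z * (φ : ℂ)).re := by
    rw [Complex.mul_conj, ← Complex.ofReal_mul, Complex.ofReal_re, Complex.sq_norm]
  rw [h1]
  congr 1
  have hconj : (starRingEnd ℂ) z
      = (1 / (n : ℂ)) * ∑ k, Complex.exp (-(Complex.I * (t : ℂ) * (y k : ℂ)))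
        - (Real.exp (-t ^ 2 / 2) : ℂ) := by
    rw [hz]
    simp [map_sub, map_mul, map_sum, ← Complex.exp_conj, Complex.conj_I, Complex.conj_ofReal,
      map_div₀, map_one, map_natCast, map_ofNat]
  have hφc : ((φ : ℝ) : ℂ)
      = ((1 / (β * Real.sqrt (2 * Real.pi)) : ℝ) : ℂ)
        * Complex.exp ((-t ^ 2 / (2 * β ^ 2) : ℝ) : ℂ) := by
    rw [hφ]; push_cast [Complex.ofReal_exp]; ring
  have hg : ((Real.exp (-t ^ 2 / 2) : ℝ) : ℂ) = Complex.exp ((-t ^ 2 / 2 : ℝ) : ℂ) := by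
    rw [Complex.ofReal_exp]
  have expand : ∀ (A B g f : ℂ),
      ((1 / (n : ℂ)) * A - g) * ((1 / (n : ℂ)) * B - g) * f
        = (1 / (n : ℂ)) ^ 2 * (A * B * f) - (1 / (n : ℂ)) * (A * (g * f))
          - (1 / (n : ℂ)) * (B * (g * f)) + g * g * f := by
    intros; ring
  rw [hz, hconj, hφc, hg, expand]
  congr 1
  congr 1
  · congr 1
    · congr 1
      rw [Finset.sum_mul_sum]
      rw [Finset.sum_mul]
      refine Finset.sum_congr rfl fun j _ => ?_
      rw [Finset.sum_mul]
      refine Finset.sum_congr rfl fun k _ => ?_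
      rw [merge3]
      unfold Tc
      congr 1
      push_cast
      field_simp
      ring
    · congr 1
      rw [Finset.sum_mul]
      refine Finset.sum_congr rfl fun j _ => ?_
      rw [merge2, merge2]
      unfold Tc
      congr 1
      push_cast
      field_simp
      ring
  · congr 1
    rw [Finset.sum_mul]
    refine Finset.sum_congr rfl fun j _ => ?_
    rw [merge2, merge2]
    unfold Tc
    congr 1
    push_cast
    field_simp
    ring
  · rw [mul_assoc, merge2, merge2]
    unfold Tc
    congr 1
    push_cast
    field_simp
    ring

lemma scale (β : ℝ) (hβ : 0 < β) (q : ℝ) (hq : 0 < q) :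
    (1 / (β * Real.sqrt (2 * π))) * Real.sqrt (π / (q / (2 * β ^ 2))) = 1 / Real.sqrt q := by
  have h1 : π / (q / (2 * β ^ 2)) = (2 * π) * β ^ 2 / q := by
    field_simp
  rw [h1, show (2 * π) * β ^ 2 = β ^ 2 * (2 * π) by ring]
  rw [Real.sqrt_div (by positivity),
    Real.sqrt_mul (by positivity : (0:ℝ) ≤ β ^ 2), Real.sqrt_sq hβ.le]
  have h2 : Real.sqrt (2 * π) ≠ 0 := by positivity
  have h3 : Real.sqrt q ≠ 0 := by positivity
  field_simp

/-- Epps–Pulley closed form: for real numbers `y 1, …, y n` and `β > 0`,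
the weighted L² distance
`n ∫ |ψ_n(t) - e^{-t²/2}|² φ_β(t) dt`,
where `ψ_n(t) = (1/n) ∑_j exp(i t y_j)` is the empirical characteristic function and
`φ_β` is the centred normal density with variance `β²`, equals the closed-form
expression from equation (1) of the paper. -/
theorem eppsPulley_closed_form (n : ℕ) (hn : 0 < n) (y : Fin n → ℝ) (β : ℝ) (hβ : 0 < β) :
    (n : ℝ) * ∫ t : ℝ,
        ‖(1 / (n : ℂ)) * ∑ j, Complex.exp (Complex.I * (t : ℂ) * (y j : ℂ))
            - (Real.exp (-t ^ 2 / 2) : ℂ)‖ ^ 2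
          * ((1 / (β * Real.sqrt (2 * Real.pi))) * Real.exp (-t ^ 2 / (2 * β ^ 2)))
      = (1 / (n : ℝ)) * ∑ j, ∑ k, Real.exp (-(β ^ 2 / 2) * (y j - y k) ^ 2)
        - (2 / Real.sqrt (1 + β ^ 2))
            * ∑ j, Real.exp (-(β ^ 2 * (y j) ^ 2) / (2 * (1 + β ^ 2)))
        + (n : ℝ) / Real.sqrt (1 + 2 * β ^ 2) := by
  have hn' : (n : ℝ) ≠ 0 := Nat.cast_ne_zero.mpr hn.ne'
  have hp1 : (0:ℝ) < 1 / (2 * β ^ 2) := by positivity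
  have hp2 : (0:ℝ) < 1 / (2 * β ^ 2) + 1 / 2 := by positivity
  have hp3 : (0:ℝ) < 1 / (2 * β ^ 2) + 1 := by positivity
  have hI1 : Integrable (fun t : ℝ => ∑ j, ∑ k, Tc β (1 / (2 * β ^ 2)) (y j - y k) t) :=
    integrable_finset_sum _ fun j _ =>
      integrable_finset_sum _ fun k _ => Tc_integrable _ _ _ hp1
  have hI2 : Integrable (fun t : ℝ => ∑ j, Tc β (1 / (2 * β ^ 2) + 1 / 2) (y j) t) :=
    integrable_finset_sum _ fun j _ => Tc_integrable _ _ _ hp2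
  have hI3 : Integrable (fun t : ℝ => ∑ j, Tc β (1 / (2 * β ^ 2) + 1 / 2) (-(y j)) t) :=
    integrable_finset_sum _ fun j _ => Tc_integrable _ _ _ hp2
  have hI4 : Integrable (Tc β (1 / (2 * β ^ 2) + 1) 0) := Tc_integrable _ _ _ hp3
  have hF : Integrable (fun t : ℝ =>
      (1 / (n : ℂ)) ^ 2 * ∑ j, ∑ k, Tc β (1 / (2 * β ^ 2)) (y j - y k) t
      - (1 / (n : ℂ)) * ∑ j, Tc β (1 / (2 * β ^ 2) + 1 / 2) (y j) t
      - (1 / (n : ℂ)) * ∑ j, Tc β (1 / (2 * β ^ 2) + 1 / 2) (-(y j)) t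
      + Tc β (1 / (2 * β ^ 2) + 1) 0 t) :=
    (((hI1.const_mul _).sub (hI2.const_mul _)).sub (hI3.const_mul _)).add hI4
  have hpt := pointwise n y β hβ
  have hstep : (∫ t : ℝ,
        ‖(1 / (n : ℂ)) * ∑ j, Complex.exp (Complex.I * (t : ℂ) * (y j : ℂ))
            - (Real.exp (-t ^ 2 / 2) : ℂ)‖ ^ 2
          * ((1 / (β * Real.sqrt (2 * Real.pi))) * Real.exp (-t ^ 2 / (2 * β ^ 2))))
      = (∫ t : ℝ,
        ((1 / (n : ℂ)) ^ 2 * ∑ j, ∑ k, Tc β (1 / (2 * β ^ 2)) (y j - y k) t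
        - (1 / (n : ℂ)) * ∑ j, Tc β (1 / (2 * β ^ 2) + 1 / 2) (y j) t
        - (1 / (n : ℂ)) * ∑ j, Tc β (1 / (2 * β ^ 2) + 1 / 2) (-(y j)) t
        + Tc β (1 / (2 * β ^ 2) + 1) 0 t)).re := by
    simp_rw [hpt]
    simpa using integral_re hF
  rw [hstep]
  have hval1 : (∫ t : ℝ, ∑ j, ∑ k, Tc β (1 / (2 * β ^ 2)) (y j - y k) t)
      = ∑ j, ∑ k, (((1 / (β * Real.sqrt (2 * Real.pi))) * Real.sqrt (π / (1 / (2 * β ^ 2)))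
          * Real.exp (-((y j - y k) ^ 2) / (4 * (1 / (2 * β ^ 2)))) : ℝ) : ℂ) := by
    rw [integral_finset_sum _ fun j _ =>
      integrable_finset_sum _ fun k _ => Tc_integrable _ _ _ hp1]
    refine Finset.sum_congr rfl fun j _ => ?_
    rw [integral_finset_sum _ fun k _ => Tc_integrable _ _ _ hp1]
    exact Finset.sum_congr rfl fun k _ => Tc_integral _ _ _ hp1
  have hval2 : (∫ t : ℝ, ∑ j, Tc β (1 / (2 * β ^ 2) + 1 / 2) (y j) t)
      = ∑ j, (((1 / (β * Real.sqrt (2 * Real.pi)))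
          * Real.sqrt (π / (1 / (2 * β ^ 2) + 1 / 2))
          * Real.exp (-((y j) ^ 2) / (4 * (1 / (2 * β ^ 2) + 1 / 2))) : ℝ) : ℂ) := by
    rw [integral_finset_sum _ fun j _ => Tc_integrable _ _ _ hp2]
    exact Finset.sum_congr rfl fun j _ => Tc_integral _ _ _ hp2
  have hval3 : (∫ t : ℝ, ∑ j, Tc β (1 / (2 * β ^ 2) + 1 / 2) (-(y j)) t)
      = ∑ j, (((1 / (β * Real.sqrt (2 * Real.pi)))
          * Real.sqrt (π / (1 / (2 * β ^ 2) + 1 / 2))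
          * Real.exp (-((-(y j)) ^ 2) / (4 * (1 / (2 * β ^ 2) + 1 / 2))) : ℝ) : ℂ) := by
    rw [integral_finset_sum _ fun j _ => Tc_integrable _ _ _ hp2]
    exact Finset.sum_congr rfl fun j _ => Tc_integral _ _ _ hp2
  have hA : Integrable (fun t : ℝ =>
      (1 / (n : ℂ)) ^ 2 * ∑ j, ∑ k, Tc β (1 / (2 * β ^ 2)) (y j - y k) t) := hI1.const_mul _
  have hB : Integrable (fun t : ℝ =>
      (1 / (n : ℂ)) * ∑ j, Tc β (1 / (2 * β ^ 2) + 1 / 2) (y j) t) := hI2.const_mul _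
  have hC : Integrable (fun t : ℝ =>
      (1 / (n : ℂ)) * ∑ j, Tc β (1 / (2 * β ^ 2) + 1 / 2) (-(y j)) t) := hI3.const_mul _
  have hAB : Integrable (fun t : ℝ =>
      (1 / (n : ℂ)) ^ 2 * ∑ j, ∑ k, Tc β (1 / (2 * β ^ 2)) (y j - y k) t
      - (1 / (n : ℂ)) * ∑ j, Tc β (1 / (2 * β ^ 2) + 1 / 2) (y j) t) := hA.sub hB
  have hABC : Integrable (fun t : ℝ =>
      (1 / (n : ℂ)) ^ 2 * ∑ j, ∑ k, Tc β (1 / (2 * β ^ 2)) (y j - y k) t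
      - (1 / (n : ℂ)) * ∑ j, Tc β (1 / (2 * β ^ 2) + 1 / 2) (y j) t
      - (1 / (n : ℂ)) * ∑ j, Tc β (1 / (2 * β ^ 2) + 1 / 2) (-(y j)) t) := hAB.sub hC
  rw [integral_add hABC hI4, integral_sub hAB hC, integral_sub hA hB,
    MeasureTheory.integral_const_mul, MeasureTheory.integral_const_mul,
    MeasureTheory.integral_const_mul, hval1, hval2, hval3, Tc_integral _ _ _ hp3]
  have e2 : 1 / (2 * β ^ 2) + 1 / 2 = (1 + β ^ 2) / (2 * β ^ 2) := by field_simp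
  have e3 : 1 / (2 * β ^ 2) + 1 = (1 + 2 * β ^ 2) / (2 * β ^ 2) := by field_simp
  simp only [e2, e3]
  have hs1 := scale β hβ 1 one_pos
  have hs2 := scale β hβ (1 + β ^ 2) (by positivity)
  have hs3 := scale β hβ (1 + 2 * β ^ 2) (by positivity)
  simp only [hs1, hs2, hs3, Real.sqrt_one]
  have x1 : ∀ a : ℝ, -a ^ 2 / (4 * (1 / (2 * β ^ 2))) = -(β ^ 2 / 2) * a ^ 2 := by
    intro a; rw [div_eq_iff (by positivity)]; field_simp; ring
  have x2 : ∀ a : ℝ, -a ^ 2 / (4 * ((1 + β ^ 2) / (2 * β ^ 2)))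
      = -(β ^ 2 * a ^ 2) / (2 * (1 + β ^ 2)) := by
    intro a; rw [div_eq_div_iff (by positivity) (by positivity)]; field_simp [hβ.ne']; ring
  have x3 : Real.exp (-(0:ℝ) ^ 2 / (4 * ((1 + 2 * β ^ 2) / (2 * β ^ 2)))) = 1 := by norm_num
  simp only [neg_sq, x1, x2, x3, one_mul, mul_one]
  rw [show (1 / (n : ℂ)) = ((1 / (n : ℝ) : ℝ) : ℂ) by push_cast; ring]
  simp only [← Complex.ofReal_pow, ← Complex.ofReal_sum, ← Complex.ofReal_mul,
    ← Complex.ofReal_sub, ← Complex.ofReal_add, Complex.ofReal_re]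
  norm_num
  rw [← Finset.mul_sum]
  have hr2 : Real.sqrt (1 + β ^ 2) ≠ 0 := by positivity
  have hr3 : Real.sqrt (1 + 2 * β ^ 2) ≠ 0 := by positivity
  field_simp
  ring
end

section
/- Let δ > 0 and let m, s : ℝ → ℝ be three times continuously differentiable in a neighbourhood of 0 with m(0) = 0, m'(0) = μ₁, m''(0) = μ₂, s(0) = 1, s'(0) = σ₁, s''(0) = σ₂. Define U(x) = σ₁x² + 2μ₁x and V(x) = δσ₁²x⁴ + 4δμ₁σ₁x³ + (4δμ₁² - 2σ₁² + σ₂)x² - (4μ₁σ₁ - 2μ₂)x - 2μ₁². Then for each fixed x ∈ ℝ, as θ → 0, exp(-δ(x - m(θ))²/s(θ)) - e^{-δx²} ( 1 + δθ U(x) + (δθ²/2) V(x) ) = O(θ³). -/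
open Real Filter Asymptotics

lemma isBigO_pow_succ_of_deriv {h : ℝ → ℝ} {n : ℕ} (h0 : h 0 = 0)
    (hd : ∀ᶠ t in nhds (0:ℝ), DifferentiableAt ℝ h t)
    (hO : deriv h =O[nhds (0:ℝ)] fun θ => θ ^ n) :
    h =O[nhds (0:ℝ)] fun θ => θ ^ (n + 1) := by
  rcases hO.bound with ⟨C, hC⟩
  rcases Metric.eventually_nhds_iff.1 (hC.and hd) with ⟨ε, hε, hball⟩
  rw [isBigO_iff]
  refine ⟨|C|, Metric.eventually_nhds_iff.2 ⟨ε, hε, fun θ hθ => ?_⟩⟩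
  have hθ' : |θ| < ε := by simpa [Real.dist_eq] using hθ
  have key : ‖h θ - h 0‖ ≤ (|C| * |θ| ^ n) * ‖θ - 0‖ := by
    refine Convex.norm_image_sub_le_of_norm_hasDerivWithin_le
      (f' := deriv h) (s := Set.Icc (-|θ|) (|θ|)) (fun t ht => ?_) (fun t ht => ?_)
      (convex_Icc _ _) ⟨neg_nonpos.2 (abs_nonneg θ), abs_nonneg θ⟩
      ⟨neg_abs_le θ, le_abs_self θ⟩
    · have htθ : |t| ≤ |θ| := abs_le.2 ⟨ht.1, ht.2⟩
      have : dist t 0 < ε := by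
        rw [Real.dist_eq, sub_zero]; exact lt_of_le_of_lt htθ hθ'
      exact ((hball this).2.hasDerivAt).hasDerivWithinAt
    · have htθ : |t| ≤ |θ| := abs_le.2 ⟨ht.1, ht.2⟩
      have hdist : dist t 0 < ε := by
        rw [Real.dist_eq, sub_zero]; exact lt_of_le_of_lt htθ hθ'
      calc ‖deriv h t‖ ≤ C * ‖t ^ n‖ := (hball hdist).1
        _ ≤ |C| * |t| ^ n := by
            rw [norm_pow]
            exact mul_le_mul_of_nonneg_right (le_abs_self C)
              (pow_nonneg (abs_nonneg t) n)
        _ ≤ |C| * |θ| ^ n := by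
            exact mul_le_mul_of_nonneg_left (pow_le_pow_left₀ (abs_nonneg t) htθ n)
              (abs_nonneg C)
  rw [h0, sub_zero, sub_zero] at key
  calc ‖h θ‖ ≤ |C| * |θ| ^ n * |θ| := key
    _ = |C| * ‖θ ^ (n+1)‖ := by rw [norm_pow, Real.norm_eq_abs, pow_succ]; ring


/-- let `δ > 0` and let `m, s : ℝ → ℝ` be three times continuously
differentiable in a neighbourhood of `0` with `m(0) = 0`, `m'(0) = μ₁`, `m''(0) = μ₂`,
`s(0) = 1`, `s'(0) = σ₁`, `s''(0) = σ₂`. With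
`U(x) = σ₁x² + 2μ₁x` and
`V(x) = δσ₁²x⁴ + 4δμ₁σ₁x³ + (4δμ₁² - 2σ₁² + σ₂)x² - (4μ₁σ₁ - 2μ₂)x - 2μ₁²`,
for each fixed `x`, as `θ → 0`,
`exp(-δ(x-m(θ))²/s(θ)) - e^{-δx²}(1 + δθU(x) + (δθ²/2)V(x))` is `O(θ³)`. -/
theorem exp_standardized_taylor (δ : ℝ) (hδ : 0 < δ) (μ₁ μ₂ σ₁ σ₂ : ℝ) (m s : ℝ → ℝ)
    (hm : ContDiffAt ℝ 3 m 0) (hs : ContDiffAt ℝ 3 s 0)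
    (hm0 : m 0 = 0) (hm1 : deriv m 0 = μ₁) (hm2 : deriv (deriv m) 0 = μ₂)
    (hs0 : s 0 = 1) (hs1 : deriv s 0 = σ₁) (hs2 : deriv (deriv s) 0 = σ₂)
    (U V : ℝ → ℝ)
    (hU : ∀ x, U x = σ₁ * x ^ 2 + 2 * μ₁ * x)
    (hV : ∀ x, V x = δ * σ₁ ^ 2 * x ^ 4 + 4 * δ * μ₁ * σ₁ * x ^ 3
        + (4 * δ * μ₁ ^ 2 - 2 * σ₁ ^ 2 + σ₂) * x ^ 2 - (4 * μ₁ * σ₁ - 2 * μ₂) * x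
        - 2 * μ₁ ^ 2)
    (x : ℝ) :
    (fun θ : ℝ =>
        Real.exp (-δ * (x - m θ) ^ 2 / s θ)
          - Real.exp (-δ * x ^ 2) * (1 + δ * θ * U x + (δ * θ ^ 2 / 2) * V x))
      =O[nhds 0] (fun θ : ℝ => θ ^ 3) := by
  -- notation
  set e : ℝ := Real.exp (-δ * x ^ 2) with he
  set F : ℝ → ℝ := fun θ => Real.exp (-δ * (x - m θ) ^ 2 / s θ) with hF
  set P : ℝ → ℝ := fun θ => e * (1 + δ * θ * U x + (δ * θ ^ 2 / 2) * V x) with hP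
  -- a good open neighbourhood of 0
  obtain ⟨u₁, hu₁, hmu⟩ : ∃ u ∈ nhds (0:ℝ), ContDiffOn ℝ 3 m u := hm.contDiffOn le_rfl (by norm_num)
  obtain ⟨u₂, hu₂, hsu⟩ : ∃ u ∈ nhds (0:ℝ), ContDiffOn ℝ 3 s u := hs.contDiffOn le_rfl (by norm_num)
  have hscont : ContinuousAt s 0 := hs.continuousAt
  have hsne0 : ∀ᶠ t in nhds (0:ℝ), s t ≠ 0 := by
    have : ∀ᶠ t in nhds (0:ℝ), s t ∈ {y : ℝ | y ≠ 0} := by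
      apply hscont.eventually_mem
      simp [hs0, isOpen_ne.mem_nhds]
    exact this
  obtain ⟨U₀, hU₀n, hU₀o, h0U⟩ := mem_nhds_iff.1
    (Filter.inter_mem (Filter.inter_mem hu₁ hu₂) hsne0)
  -- facts on U₀
  have hmU : ContDiffOn ℝ 3 m U₀ := hmu.mono (fun t ht => ((hU₀n ht).1).1)
  have hsU : ContDiffOn ℝ 3 s U₀ := hsu.mono (fun t ht => ((hU₀n ht).1).2)
  have hsne : ∀ t ∈ U₀, s t ≠ 0 := fun t ht => (hU₀n ht).2
  have hmd : ∀ t ∈ U₀, HasDerivAt m (deriv m t) t := fun t ht =>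
    ((hmU.differentiableOn (by norm_num)).differentiableAt (hU₀o.mem_nhds ht)).hasDerivAt
  have hsd : ∀ t ∈ U₀, HasDerivAt s (deriv s t) t := fun t ht =>
    ((hsU.differentiableOn (by norm_num)).differentiableAt (hU₀o.mem_nhds ht)).hasDerivAt
  have hmU' : ContDiffOn ℝ 2 (deriv m) U₀ := hmU.deriv_of_isOpen hU₀o (by norm_num)
  have hsU' : ContDiffOn ℝ 2 (deriv s) U₀ := hsU.deriv_of_isOpen hU₀o (by norm_num)
  have hmd' : ∀ t ∈ U₀, HasDerivAt (deriv m) (deriv (deriv m) t) t := fun t ht =>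
    ((hmU'.differentiableOn (by norm_num)).differentiableAt (hU₀o.mem_nhds ht)).hasDerivAt
  have hsd' : ∀ t ∈ U₀, HasDerivAt (deriv s) (deriv (deriv s) t) t := fun t ht =>
    ((hsU'.differentiableOn (by norm_num)).differentiableAt (hU₀o.mem_nhds ht)).hasDerivAt
  have hmU'' : ContDiffOn ℝ 1 (deriv (deriv m)) U₀ :=
    hmU'.deriv_of_isOpen hU₀o (by norm_num)
  have hsU'' : ContDiffOn ℝ 1 (deriv (deriv s)) U₀ :=
    hsU'.deriv_of_isOpen hU₀o (by norm_num)
  have hmd'' : DifferentiableAt ℝ (deriv (deriv m)) 0 :=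
    ((hmU''.differentiableOn (by norm_num)).differentiableAt (hU₀o.mem_nhds h0U))
  have hsd'' : DifferentiableAt ℝ (deriv (deriv s)) 0 :=
    ((hsU''.differentiableOn (by norm_num)).differentiableAt (hU₀o.mem_nhds h0U))
  -- first derivative of F
  obtain ⟨G1, hG1⟩ : ∃ G1 : ℝ → ℝ, G1 = fun t => F t *
      ((2 * δ * (x - m t) * deriv m t * s t + δ * (x - m t) ^ 2 * deriv s t) / (s t) ^ 2) :=
    ⟨_, rfl⟩
  have hd1 : ∀ t ∈ U₀, HasDerivAt F (G1 t) t := by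
    intro t ht
    have h1 : HasDerivAt (fun u => x - m u) (0 - deriv m t) t :=
      (hasDerivAt_const t x).sub (hmd t ht)
    have h2 : HasDerivAt (fun u => (x - m u) ^ 2)
        ((2 : ℕ) * (x - m t) ^ 1 * (0 - deriv m t)) t := h1.pow 2
    have h3 : HasDerivAt (fun u => -δ * (x - m u) ^ 2)
        (-δ * ((2 : ℕ) * (x - m t) ^ 1 * (0 - deriv m t))) t := h2.const_mul (-δ)
    have h4 := h3.div (hsd t ht) (hsne t ht)
    have h5 := (Real.hasDerivAt_exp (-δ * (x - m t) ^ 2 / s t)).comp t h4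
    convert h5 using 1
    · rfl
    · rfl
    · rfl
    rw [hG1]
    show F t * _ = Real.exp (-δ * (x - m t) ^ 2 / s t) * _
    rw [hF]
    have h6 := hsne t ht
    field_simp
    try ring
    try tauto
  -- second derivative of F
  obtain ⟨G2, hG2⟩ : ∃ G2 : ℝ → ℝ, G2 = fun t => F t *
      (((2 * δ * (x - m t) * deriv m t * s t + δ * (x - m t) ^ 2 * deriv s t) / (s t) ^ 2) ^ 2
        + ((-2 * δ * (deriv m t) ^ 2 * s t + 2 * δ * (x - m t) * deriv (deriv m) t * s t
              + δ * (x - m t) ^ 2 * deriv (deriv s) t) * (s t) ^ 2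
            - 2 * s t * deriv s t
              * (2 * δ * (x - m t) * deriv m t * s t + δ * (x - m t) ^ 2 * deriv s t))
          / (s t) ^ 4) := ⟨_, rfl⟩
  have hd2 : ∀ t ∈ U₀, HasDerivAt G1 (G2 t) t := by
    intro t ht
    have h1 : HasDerivAt (fun u => x - m u) (0 - deriv m t) t :=
      (hasDerivAt_const t x).sub (hmd t ht)
    -- numerator N u = 2δ(x-m u)(m' u)(s u) + δ(x-m u)²(s' u)
    have hN : HasDerivAt
        (fun u => 2 * δ * (x - m u) * deriv m u * s u + δ * (x - m u) ^ 2 * deriv s u)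
        (((2 * δ * (0 - deriv m t) * deriv m t + 2 * δ * (x - m t) * deriv (deriv m) t) * s t
            + 2 * δ * (x - m t) * deriv m t * deriv s t)
          + ((δ * ((2 : ℕ) * (x - m t) ^ 1 * (0 - deriv m t))) * deriv s t
            + δ * (x - m t) ^ 2 * deriv (deriv s) t)) t := by
      have ha : HasDerivAt (fun u => 2 * δ * (x - m u))
          (2 * δ * (0 - deriv m t)) t := h1.const_mul (2 * δ)
      have hb : HasDerivAt (fun u => 2 * δ * (x - m u) * deriv m u)
          (2 * δ * (0 - deriv m t) * deriv m t
            + 2 * δ * (x - m t) * deriv (deriv m) t) t := ha.mul (hmd' t ht)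
      have hc : HasDerivAt (fun u => 2 * δ * (x - m u) * deriv m u * s u)
          ((2 * δ * (0 - deriv m t) * deriv m t + 2 * δ * (x - m t) * deriv (deriv m) t) * s t
            + 2 * δ * (x - m t) * deriv m t * deriv s t) t := hb.mul (hsd t ht)
      have hd' : HasDerivAt (fun u => δ * (x - m u) ^ 2)
          (δ * ((2 : ℕ) * (x - m t) ^ 1 * (0 - deriv m t))) t := (h1.pow 2).const_mul δ
      have he' : HasDerivAt (fun u => δ * (x - m u) ^ 2 * deriv s u)
          ((δ * ((2 : ℕ) * (x - m t) ^ 1 * (0 - deriv m t))) * deriv s t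
            + δ * (x - m t) ^ 2 * deriv (deriv s) t) t := hd'.mul (hsd' t ht)
      exact hc.add he'
    have hden : HasDerivAt (fun u => (s u) ^ 2)
        ((2 : ℕ) * (s t) ^ 1 * deriv s t) t := (hsd t ht).pow 2
    have hsq : (s t) ^ 2 ≠ 0 := pow_ne_zero _ (hsne t ht)
    have hD := hN.div hden hsq
    have hG := (hd1 t ht).mul hD
    convert hG using 1
    · rfl
    · rfl
    · rw [hG1]; rfl
    rw [hG2, hG1]
    simp only [Pi.div_apply]
    have h6 := hsne t ht
    field_simp
    ring
  -- derivative of the polynomial part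
  have hPd : ∀ t : ℝ, HasDerivAt P (e * (δ * U x + δ * t * V x)) t := by
    intro t
    have hA : HasDerivAt (fun θ : ℝ => δ * θ * U x) (δ * U x) t := by
      simpa using ((hasDerivAt_id t).const_mul δ).mul_const (U x)
    have hB : HasDerivAt (fun θ : ℝ => δ * θ ^ 2 / 2 * V x) (δ * t * V x) t := by
      have h1 := ((hasDerivAt_pow 2 t).const_mul δ).div_const 2
      have h2 := h1.mul_const (V x)
      convert h2 using 1
      · rfl
      · rfl
      push_cast
      ring
    have := (((hasDerivAt_const t (1:ℝ)).add hA).add hB).const_mul e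
    convert this using 2
    · rfl
    · rfl
    · rfl
    ring
  have hPd' : ∀ t : ℝ, HasDerivAt (fun t => e * (δ * U x + δ * t * V x)) (e * (δ * V x)) t := by
    intro t
    have hA : HasDerivAt (fun θ : ℝ => δ * θ * V x) (δ * V x) t := by
      simpa using ((hasDerivAt_id t).const_mul δ).mul_const (V x)
    have := ((hasDerivAt_const t (δ * U x)).add hA).const_mul e
    convert this using 2
    · rfl
    · rfl
    · rfl
    ring
  -- the difference function
  set h : ℝ → ℝ := fun θ => F θ - P θ with hh
  have hUev : U₀ ∈ nhds (0:ℝ) := hU₀o.mem_nhds h0U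
  -- h(0) = 0
  have h00 : h 0 = 0 := by
    simp only [hh, hF, hP, he, hm0, hs0]
    norm_num
  -- deriv h = G1 - P' eventually
  have hhd : ∀ t ∈ U₀, HasDerivAt h (G1 t - e * (δ * U x + δ * t * V x)) t :=
    fun t ht => (hd1 t ht).sub (hPd t)
  set Q : ℝ → ℝ := fun t => G1 t - e * (δ * U x + δ * t * V x) with hQ
  have hderivh : deriv h =ᶠ[nhds (0:ℝ)] Q :=
    Filter.eventually_of_mem hUev (fun t ht => (hhd t ht).deriv)
  -- deriv h (0) = 0
  have hQ0 : Q 0 = 0 := by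
    simp only [hQ, hG1, hF, hm0, hs0, hm1, hs1, he, hU]
    norm_num
    ring
  have hderivh0 : deriv h 0 = 0 := by
    rw [(hhd 0 h0U).deriv]
    have := hQ0
    simp only [hQ] at this
    simpa using this
  -- Q has derivative R eventually
  set R : ℝ → ℝ := fun t => G2 t - e * (δ * V x) with hR
  have hQd : ∀ t ∈ U₀, HasDerivAt Q (R t) t := fun t ht => (hd2 t ht).sub (hPd' t)
  -- R 0 = 0
  have hR0 : R 0 = 0 := by
    simp only [hR, hG2, hF, hm0, hs0, hm1, hs1, hm2, hs2, he, hV]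
    norm_num
    ring
  -- R is differentiable at 0
  have hF0d : DifferentiableAt ℝ F 0 := (hd1 0 h0U).differentiableAt
  have hm0d : DifferentiableAt ℝ m 0 := (hmd 0 h0U).differentiableAt
  have hs0d : DifferentiableAt ℝ s 0 := (hsd 0 h0U).differentiableAt
  have hm0d' : DifferentiableAt ℝ (deriv m) 0 := (hmd' 0 h0U).differentiableAt
  have hs0d' : DifferentiableAt ℝ (deriv s) 0 := (hsd' 0 h0U).differentiableAt
  have hsne00 : s 0 ≠ 0 := hsne 0 h0U
  have hRdiff : DifferentiableAt ℝ R 0 := by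
    rw [hR, hG2]
    have h2 : (s 0 : ℝ) ^ 2 ≠ 0 := pow_ne_zero _ hsne00
    have h4 : (s 0 : ℝ) ^ 4 ≠ 0 := pow_ne_zero _ hsne00
    fun_prop (disch := assumption)
  -- deriv (deriv h) =O[𝓝 0] θ^1
  have hO1 : deriv (deriv h) =O[nhds (0:ℝ)] fun θ => θ ^ 1 := by
    have e1 : deriv (deriv h) =ᶠ[nhds (0:ℝ)] R := by
      refine (hderivh.deriv).trans ?_
      exact Filter.eventually_of_mem hUev (fun t ht => (hQd t ht).deriv)
    have e2 : (fun t => R t - R 0) =O[nhds (0:ℝ)] (fun t => t - 0) := hRdiff.isBigO_sub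
    have e3 : R =O[nhds (0:ℝ)] fun θ => θ ^ 1 := by
      simpa [hR0] using e2
    exact e1.trans_isBigO e3
  -- deriv h =O θ²
  have hO2 : deriv h =O[nhds (0:ℝ)] fun θ => θ ^ 2 := by
    have := isBigO_pow_succ_of_deriv (n := 1) hderivh0 ?_ hO1
    · exact this
    · refine Filter.eventually_of_mem hUev (fun t ht => ?_)
      have hQt : DifferentiableAt ℝ Q t := (hQd t ht).differentiableAt
      have hev : deriv h =ᶠ[nhds t] Q :=
        Filter.eventually_of_mem (hU₀o.mem_nhds ht) (fun u hu => (hhd u hu).deriv)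
      exact hev.differentiableAt_iff.2 hQt
  -- h =O θ³
  have hO3 : h =O[nhds (0:ℝ)] fun θ => θ ^ 3 := by
    refine isBigO_pow_succ_of_deriv (n := 2) h00 ?_ hO2
    exact Filter.eventually_of_mem hUev (fun t ht => (hhd t ht).differentiableAt)
  exact hO3
end
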